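/- arXiv:1507.00111 — 2 statements merged into one kernel-verified Lean document; each statement's English description precedes it below -/
import Mathlib

section
/- Let p be an odd prime, k ≥ 1, and let a, b be integers coprime to p with a^(p−1) ≡ b^(p−1) (mod p^(k−1)). Then there exists a (p−1)-th root of unity ζ ∈ ℤ_p such that |a − bζ|_p ≤ p^(−k+1). -/
theorem stmt_5 (p : ℕ) [Fact p.Prime] (hp2 : p ≠ 2) (k : ℕ) (hk : 1 ≤ k)
    (a b : ℤ) (hab : IsCoprime (a * b) (p : ℤ))
    (h : (p : ℤ) ^ (k - 1) ∣ a ^ (p - 1) - b ^ (p - 1)) :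
    ∃ ζ : ℤ_[p], ζ ^ (p - 1) = 1 ∧
      ‖(a : ℤ_[p]) - (b : ℤ_[p]) * ζ‖ ≤ (p : ℝ) ^ (-(k : ℤ) + 1) := by
  have hp := Fact.out (p := p.Prime)
  have hp1 : 1 < p := hp.one_lt
  set n := p - 1 with hn
  have hpunit : ¬ IsUnit (p : ℤ) := by
    rw [Int.isUnit_iff]; omega
  have hpa : ¬ (p : ℤ) ∣ a := fun hd =>
    hpunit (hab.isUnit_of_dvd' (hd.mul_right b) dvd_rfl)
  have hpb : ¬ (p : ℤ) ∣ b := fun hd =>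
    hpunit (hab.isUnit_of_dvd' (hd.mul_left a) dvd_rfl)
  have hna : ‖((a : ℤ) : ℤ_[p])‖ = 1 :=
    le_antisymm (PadicInt.norm_le_one _) (not_lt.mp fun hlt =>
      hpa ((PadicInt.norm_int_lt_one_iff_dvd a).mp hlt))
  have hnb : ‖((b : ℤ) : ℤ_[p])‖ = 1 :=
    le_antisymm (PadicInt.norm_le_one _) (not_lt.mp fun hlt =>
      hpb ((PadicInt.norm_int_lt_one_iff_dvd b).mp hlt))
  have hbu : IsUnit ((b : ℤ) : ℤ_[p]) := PadicInt.isUnit_iff.mpr hnb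
  set B := hbu.unit with hB
  have hBb : (B : ℤ_[p]) = ((b : ℤ) : ℤ_[p]) := hbu.unit_spec
  set u : ℤ_[p] := (↑B⁻¹ : ℤ_[p]) * ((a : ℤ) : ℤ_[p]) with hu
  have hBinv : (↑B⁻¹ : ℤ_[p]) * ((b : ℤ) : ℤ_[p]) = 1 := by
    rw [← hBb]; exact_mod_cast B.inv_mul
  have hnBinv : ‖(↑B⁻¹ : ℤ_[p])‖ = 1 := PadicInt.isUnit_iff.mp B⁻¹.isUnit
  have hnu : ‖u‖ = 1 := by rw [hu, norm_mul, hnBinv, hna, one_mul]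
  have key : u ^ n - 1 =
      (↑B⁻¹ : ℤ_[p]) ^ n * (((a : ℤ) : ℤ_[p]) ^ n - ((b : ℤ) : ℤ_[p]) ^ n) := by
    rw [mul_sub, ← mul_pow, ← mul_pow, hBinv, one_pow, hu]
  have hnormkey : ‖u ^ n - 1‖ = ‖((a ^ n - b ^ n : ℤ) : ℤ_[p])‖ := by
    rw [key, norm_mul, norm_pow, hnBinv, one_pow, one_mul]
    push_cast
    ring_nf
  have hfermat : (p : ℤ) ∣ a ^ n - b ^ n := by
    have ha0 : ((a : ZMod p)) ≠ 0 := fun h0 =>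
      hpa ((ZMod.intCast_zmod_eq_zero_iff_dvd a p).mp h0)
    have hb0 : ((b : ZMod p)) ≠ 0 := fun h0 =>
      hpb ((ZMod.intCast_zmod_eq_zero_iff_dvd b p).mp h0)
    rw [← ZMod.intCast_zmod_eq_zero_iff_dvd]
    push_cast
    rw [hn, ZMod.pow_card_sub_one_eq_one ha0, ZMod.pow_card_sub_one_eq_one hb0, sub_self]
  have hsmall : ‖u ^ n - 1‖ < 1 := by
    rw [hnormkey]
    exact (PadicInt.norm_int_lt_one_iff_dvd _).mpr hfermat
  have hbound : ‖u ^ n - 1‖ ≤ (p : ℝ) ^ (-((k - 1 : ℕ) : ℤ)) := by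
    rw [hnormkey]
    exact PadicInt.norm_int_le_pow_iff_dvd.mpr h
  set F : Polynomial ℤ_[p] := Polynomial.X ^ n - 1 with hF
  have hevalu : F.eval u = u ^ n - 1 := by simp [hF]
  have hderiv : F.derivative = Polynomial.C (n : ℤ_[p]) * Polynomial.X ^ (n - 1) := by
    simp [hF, Polynomial.derivative_X_pow]
  have hnn : ‖((n : ℕ) : ℤ_[p])‖ = 1 := by
    have hpn : ¬ (p : ℤ) ∣ (n : ℤ) := by
      rw [Int.natCast_dvd_natCast]
      intro hd
      have := Nat.le_of_dvd (by omega) hd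
      omega
    have hcast : (((n : ℤ)) : ℤ_[p]) = ((n : ℕ) : ℤ_[p]) := by push_cast; ring
    rw [← hcast]
    exact le_antisymm (PadicInt.norm_le_one _) (not_lt.mp fun hlt =>
      hpn ((PadicInt.norm_int_lt_one_iff_dvd _).mp hlt))
  have hderivu : ‖F.derivative.eval u‖ = 1 := by
    rw [hderiv]
    simp [norm_mul, norm_pow, hnn, hnu]
  have hnorm : ‖F.eval u‖ < ‖F.derivative.eval u‖ ^ 2 := by
    rw [hevalu, hderivu, one_pow]; exact hsmall
  obtain ⟨z, hz0, hzd, -, -⟩ := hensels_lemma hnorm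
  have hzn : z ^ n = 1 := by
    rw [hF] at hz0
    simpa [sub_eq_zero] using hz0
  rw [Polynomial.coe_aeval_eq_eval, hderivu] at hzd
  set S : ℤ_[p] := ∑ i ∈ Finset.range n, u ^ i * z ^ (n - 1 - i) with hS
  have hSmul : S * (u - z) = u ^ n - 1 := by
    rw [hS, geom_sum₂_mul, hzn]
  have h1 : ∀ i ∈ Finset.range n, u ^ i * u ^ (n - 1 - i) = u ^ (n - 1) := by
    intro i hi
    rw [← pow_add]
    congr 1
    simp only [Finset.mem_range] at hi
    omega
  have h2 : ∑ i ∈ Finset.range n, u ^ i * u ^ (n - 1 - i)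
      = ((n : ℕ) : ℤ_[p]) * u ^ (n - 1) := by
    rw [Finset.sum_congr rfl h1, Finset.sum_const, Finset.card_range, nsmul_eq_mul]
  have hdvd : (z - u) ∣ (S - ((n : ℕ) : ℤ_[p]) * u ^ (n - 1)) := by
    rw [← h2, hS, ← Finset.sum_sub_distrib]
    refine Finset.dvd_sum fun i hi => ?_
    have hfac : u ^ i * z ^ (n - 1 - i) - u ^ i * u ^ (n - 1 - i)
        = u ^ i * (z ^ (n - 1 - i) - u ^ (n - 1 - i)) := by ring
    rw [hfac]
    exact Dvd.dvd.mul_left (sub_dvd_pow_sub_pow z u _) _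
  have hsmallS : ‖S - ((n : ℕ) : ℤ_[p]) * u ^ (n - 1)‖ < 1 := by
    obtain ⟨c, hc⟩ := hdvd
    rw [hc, norm_mul]
    calc ‖z - u‖ * ‖c‖ ≤ ‖z - u‖ * 1 :=
          mul_le_mul_of_nonneg_left (PadicInt.norm_le_one c) (norm_nonneg _)
      _ < 1 := by rw [mul_one]; exact hzd
  have hNn : ‖((n : ℕ) : ℤ_[p]) * u ^ (n - 1)‖ = 1 := by
    rw [norm_mul, norm_pow, hnn, hnu]; simp
  have hSnorm : ‖S‖ = 1 := by
    have hre : S = ((n : ℕ) : ℤ_[p]) * u ^ (n - 1)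
        + (S - ((n : ℕ) : ℤ_[p]) * u ^ (n - 1)) := by ring
    rw [hre, PadicInt.norm_add_eq_max_of_ne (by rw [hNn]; exact (ne_of_lt hsmallS).symm),
      hNn]
    exact max_eq_left hsmallS.le
  have hdist : ‖u - z‖ = ‖u ^ n - 1‖ := by
    rw [← hSmul, norm_mul, hSnorm, one_mul]
  have hfin : ((a : ℤ) : ℤ_[p]) - ((b : ℤ) : ℤ_[p]) * z = ((b : ℤ) : ℤ_[p]) * (u - z) := by
    rw [hu, mul_sub,
      show ((b : ℤ) : ℤ_[p]) * ((↑B⁻¹ : ℤ_[p]) * ((a : ℤ) : ℤ_[p]))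
        = ((↑B⁻¹ : ℤ_[p]) * ((b : ℤ) : ℤ_[p])) * ((a : ℤ) : ℤ_[p]) by ring,
      hBinv, one_mul]
  refine ⟨z, hzn, ?_⟩
  rw [hfin, norm_mul, hnb, one_mul, hdist]
  have hexp : (-((k - 1 : ℕ) : ℤ)) = -(k : ℤ) + 1 := by
    have : ((k - 1 : ℕ) : ℤ) = (k : ℤ) - 1 := by
      push_cast [Nat.cast_sub hk]; ring
    rw [this]; ring
  rw [← hexp]
  exact hbound
end

section
/- Let p be an odd prime and k ≥ 2. Suppose integers a, b satisfy gcd(ab, p) = 1, a^(p−1) ≡ b^(p−1) (mod p^(k−1)), and a ≢ ±b (mod p^(k−1)). Then there exists a (p−1)-th root of unity ζ ∈ ℤ_p with ζ ≠ 1 and ζ ≠ −1 such that |a − bζ|_p ≤ p^(−k+1). -/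
theorem stmt_16 (p : ℕ) [Fact p.Prime] (hp2 : p ≠ 2) (k : ℕ) (hk : 2 ≤ k)
    (a b : ℤ) (hab : IsCoprime (a * b) (p : ℤ))
    (h1 : (p : ℤ) ^ (k - 1) ∣ a ^ (p - 1) - b ^ (p - 1))
    (h2 : ¬ ((p : ℤ) ^ (k - 1) ∣ a - b)) (h3 : ¬ ((p : ℤ) ^ (k - 1) ∣ a + b)) :
    ∃ ζ : ℤ_[p], ζ ^ (p - 1) = 1 ∧ ζ ≠ 1 ∧ ζ ≠ -1 ∧
      ‖(a : ℤ_[p]) - (b : ℤ_[p]) * ζ‖ ≤ (p : ℝ) ^ (-(k : ℤ) + 1) := by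
  have hp : p.Prime := Fact.out
  have hpab : ¬ (p : ℤ) ∣ a * b := fun hd =>
    (Nat.prime_iff_prime_int.mp hp).not_unit (hab.isUnit_of_dvd' hd dvd_rfl)
  have hpa : ¬ (p : ℤ) ∣ a := fun h => hpab (h.mul_right b)
  have hpb : ¬ (p : ℤ) ∣ b := fun h => hpab (h.mul_left a)
  have hna : ‖(a : ℤ_[p])‖ = 1 :=
    le_antisymm (PadicInt.norm_le_one _) (le_of_not_gt (fun h => hpa ((PadicInt.norm_int_lt_one_iff_dvd a).mp h)))
  have hnb : ‖(b : ℤ_[p])‖ = 1 :=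
    le_antisymm (PadicInt.norm_le_one _) (le_of_not_gt (fun h => hpb ((PadicInt.norm_int_lt_one_iff_dvd b).mp h)))
  obtain ⟨u, hu⟩ : IsUnit (b : ℤ_[p]) := PadicInt.isUnit_iff.mpr hnb
  set c : ℤ_[p] := (a : ℤ_[p]) * ↑u⁻¹ with hc
  have hnc : ‖c‖ = 1 := by rw [hc, norm_mul, hna, PadicInt.norm_units, one_mul]
  have hbu : (b : ℤ_[p]) * ↑u⁻¹ = 1 := by rw [← hu]; exact u.mul_inv
  -- norm of f(c) = c^(p-1) - 1
  have hkey : c ^ (p - 1) - 1 = ((a : ℤ_[p]) ^ (p - 1) - (b : ℤ_[p]) ^ (p - 1)) * (↑u⁻¹ : ℤ_[p]) ^ (p - 1) := by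
    rw [sub_mul, ← mul_pow, ← mul_pow, hbu, one_pow, hc]
  have hfc : ‖c ^ (p - 1) - 1‖ ≤ (p : ℝ) ^ (-((k - 1 : ℕ) : ℤ)) := by
    rw [hkey, norm_mul]
    have : ‖(a : ℤ_[p]) ^ (p - 1) - (b : ℤ_[p]) ^ (p - 1)‖ ≤ (p : ℝ) ^ (-((k - 1 : ℕ) : ℤ)) := by
      rw [show ((a : ℤ_[p]) ^ (p - 1) - (b : ℤ_[p]) ^ (p - 1)) = ((a ^ (p - 1) - b ^ (p - 1) : ℤ) : ℤ_[p]) by push_cast; ring]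
      exact PadicInt.norm_int_le_pow_iff_dvd.mpr h1
    calc ‖(a : ℤ_[p]) ^ (p - 1) - (b : ℤ_[p]) ^ (p - 1)‖ * ‖(↑u⁻¹ : ℤ_[p]) ^ (p - 1)‖
        ≤ (p : ℝ) ^ (-((k - 1 : ℕ) : ℤ)) * 1 := by
          apply mul_le_mul this (PadicInt.norm_le_one _) (norm_nonneg _)
          positivity
      _ = _ := mul_one _
  -- Hensel
  have hp1 : 1 ≤ p - 1 := Nat.le_sub_one_of_lt hp.one_lt
  set F : Polynomial ℤ_[p] := Polynomial.X ^ (p - 1) - Polynomial.C 1 with hF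
  have hFeval : ∀ z : ℤ_[p], F.eval z = z ^ (p - 1) - 1 := by intro z; simp [hF]
  have hFderiv : ∀ z : ℤ_[p], F.derivative.eval z = ((p : ℤ_[p]) - 1) * z ^ (p - 2) := by
    intro z
    have : F.derivative = Polynomial.C ((p - 1 : ℕ) : ℤ_[p]) * Polynomial.X ^ (p - 1 - 1) := by
      simp [hF, Polynomial.derivative_X_pow]
    rw [this]
    have : ((p - 1 : ℕ) : ℤ_[p]) = (p : ℤ_[p]) - 1 := by
      push_cast [Nat.cast_sub hp.one_le]; ring
    simp [this, Nat.sub_sub]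
  have hnp1 : ‖(p : ℤ_[p]) - 1‖ = 1 := by
    have : ((p : ℤ_[p]) - 1) = (((p : ℤ) - 1 : ℤ) : ℤ_[p]) := by push_cast; ring
    rw [this]
    refine le_antisymm (PadicInt.norm_le_one _) (le_of_not_gt fun h => ?_)
    have := (PadicInt.norm_int_lt_one_iff_dvd _).mp h
    have h2' : (p : ℤ) ∣ 1 := (dvd_sub_right (dvd_refl _)).mp (by simpa using this.sub (dvd_refl (p:ℤ)))
    exact hp.one_lt.ne' (by exact_mod_cast Int.eq_one_of_dvd_one (by positivity) h2')
  have hFdc : ‖F.derivative.eval c‖ = 1 := by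
    rw [hFderiv, norm_mul, hnp1, norm_pow, hnc, one_pow, one_mul]
  have hlt1 : ‖F.eval c‖ < 1 := by
    rw [hFeval]
    refine lt_of_le_of_lt hfc ?_
    have : (p : ℝ) ^ (-((k - 1 : ℕ) : ℤ)) < (p:ℝ) ^ (0:ℤ) := by
      apply zpow_lt_zpow_right₀ (by exact_mod_cast hp.one_lt)
      omega
    simpa using this
  obtain ⟨ζ, hζ0, hζc, -, -⟩ := hensels_lemma (F := F) (a := c) (by simp only [Polynomial.coe_aeval_eq_eval]; rw [hFdc]; simpa using hlt1)
  have hζpow : ζ ^ (p - 1) = 1 := by simp only [Polynomial.coe_aeval_eq_eval] at hζ0; have := hFeval ζ; rw [hζ0] at this; exact sub_eq_zero.mp this.symm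
  have hζc1 : ‖ζ - c‖ < 1 := by simp only [Polynomial.coe_aeval_eq_eval] at hζc; rwa [hFdc] at hζc
  -- toZMod ζ = toZMod c
  have hmem : ζ - c ∈ IsLocalRing.maximalIdeal ℤ_[p] := by
    rw [PadicInt.maximalIdeal_eq_span_p, Ideal.mem_span_singleton]
    exact (PadicInt.norm_lt_one_iff_dvd _).mp hζc1
  have hbar : PadicInt.toZMod ζ = PadicInt.toZMod c := by
    have : PadicInt.toZMod (ζ - c) = 0 := by
      rw [← RingHom.mem_ker, PadicInt.ker_toZMod]; exact hmem
    rw [map_sub, sub_eq_zero] at this; exact this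
  have hcbar : PadicInt.toZMod c ≠ 0 := by
    intro h
    have : c ∈ IsLocalRing.maximalIdeal ℤ_[p] := by
      rw [← PadicInt.ker_toZMod]; exact h
    rw [PadicInt.maximalIdeal_eq_span_p, Ideal.mem_span_singleton,
      ← PadicInt.norm_lt_one_iff_dvd] at this
    rw [hnc] at this; exact lt_irrefl 1 this
  -- the geometric sum is a unit
  set S : ℤ_[p] := ∑ i ∈ Finset.range (p - 1), c ^ i * ζ ^ (p - 1 - 1 - i) with hS
  have hSmul : S * (c - ζ) = c ^ (p - 1) - 1 := by
    rw [hS, geom_sum₂_mul, hζpow]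
  have hSbar : PadicInt.toZMod S = (((p - 1 : ℕ) : ZMod p)) * (PadicInt.toZMod c) ^ (p - 2) := by
    rw [hS, map_sum]
    have : ∀ i ∈ Finset.range (p - 1),
        PadicInt.toZMod (c ^ i * ζ ^ (p - 1 - 1 - i)) = (PadicInt.toZMod c) ^ (p - 2) := by
      intro i hi
      rw [map_mul, map_pow, map_pow, hbar, ← pow_add]
      congr 1
      have := Finset.mem_range.mp hi
      omega
    rw [Finset.sum_congr rfl this, Finset.sum_const, Finset.card_range, nsmul_eq_mul]
  have hnS : ‖S‖ = 1 := by
    refine le_antisymm (PadicInt.norm_le_one _) (le_of_not_gt fun h => ?_)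
    have hS0 : PadicInt.toZMod S = 0 := by
      have : S ∈ IsLocalRing.maximalIdeal ℤ_[p] := by
        rw [PadicInt.maximalIdeal_eq_span_p, Ideal.mem_span_singleton]
        exact (PadicInt.norm_lt_one_iff_dvd _).mp h
      rw [← RingHom.mem_ker, PadicInt.ker_toZMod]; exact this
    rw [hSbar] at hS0
    rcases mul_eq_zero.mp hS0 with h' | h'
    · have hd := (ZMod.natCast_eq_zero_iff (p - 1) p).mp h'
      have := Nat.le_of_dvd (by omega) hd
      omega
    · exact hcbar (pow_eq_zero_iff (by omega : p - 2 ≠ 0) |>.mp h' )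
  -- sharp bound
  have hdist : ‖c - ζ‖ ≤ (p : ℝ) ^ (-((k - 1 : ℕ) : ℤ)) := by
    have : ‖S * (c - ζ)‖ = ‖c - ζ‖ := by rw [norm_mul, hnS, one_mul]
    rw [← this, hSmul]; exact hfc
  have habz : (a : ℤ_[p]) - (b : ℤ_[p]) * ζ = (c - ζ) * ↑u := by
    rw [sub_mul, hc, mul_assoc, u.inv_mul, mul_one, hu, mul_comm]
  have hnormfin : ‖(a : ℤ_[p]) - (b : ℤ_[p]) * ζ‖ ≤ (p : ℝ) ^ (-(k : ℤ) + 1) := by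
    rw [habz, norm_mul, PadicInt.norm_units, mul_one]
    have : (-((k - 1 : ℕ) : ℤ)) = -(k : ℤ) + 1 := by
      push_cast [Nat.cast_sub (by omega : 1 ≤ k)]; ring
    rw [← this]; exact hdist
  have hdvd : ∀ z : ℤ, ((z : ℤ_[p]) = (c - ζ) * ↑u) → (p : ℤ) ^ (k - 1) ∣ z := by
    intro z hz
    rw [← PadicInt.norm_int_le_pow_iff_dvd, hz, norm_mul, PadicInt.norm_units, mul_one]
    exact hdist
  refine ⟨ζ, hζpow, ?_, ?_, hnormfin⟩
  · intro hζ1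
    apply h2
    apply hdvd
    rw [hζ1] at habz ⊢
    push_cast
    rw [← habz, mul_one]
  · intro hζ1
    apply h3
    apply hdvd
    rw [hζ1] at habz ⊢
    push_cast
    rw [← habz]; ring
end
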